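/- (Ceva, concurrency form used in the main construction) Let ABC be a nondegenerate triangle and let A₀ ∈ segment BC, B₀ ∈ segment CA, C₀ ∈ segment AB be interior points of the sides. If (dist(C,A₀)/dist(B,A₀)) · (dist(B,C₀)/dist(A,C₀)) · (dist(A,B₀)/dist(C,B₀)) = 1, then the cevians AA₀, BB₀, CC₀ are concurrent: there exists a point F lying on all three lines. -/

import Mathlib

open AffineMap

/-- Converse of Ceva's theorem (unsigned ratios, interior points): if the
product of the side ratios equals `1`, the three cevians are concurrent. -/
theorem stmt_13 (A B C A₀ B₀ C₀ : EuclideanSpace ℝ (Fin 2))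
    (hABC : AffineIndependent ℝ ![A, B, C])
    (hA₀ : Sbtw ℝ B A₀ C) (hB₀ : Sbtw ℝ C B₀ A) (hC₀ : Sbtw ℝ A C₀ B)
    (hceva : (dist C A₀ / dist B A₀) * (dist B C₀ / dist A C₀) *
      (dist A B₀ / dist C B₀) = 1) :
    ∃ F : EuclideanSpace ℝ (Fin 2),
      F ∈ affineSpan ℝ ({A, A₀} : Set (EuclideanSpace ℝ (Fin 2))) ∧
      F ∈ affineSpan ℝ ({B, B₀} : Set (EuclideanSpace ℝ (Fin 2))) ∧
      F ∈ affineSpan ℝ ({C, C₀} : Set (EuclideanSpace ℝ (Fin 2))) := by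
  obtain ⟨⟨t, ht, rfl⟩, hBC⟩ := sbtw_iff_mem_image_Ioo_and_ne.1 hA₀
  obtain ⟨⟨r, hr, rfl⟩, hCA⟩ := sbtw_iff_mem_image_Ioo_and_ne.1 hB₀
  obtain ⟨⟨s, hs, rfl⟩, hAB⟩ := sbtw_iff_mem_image_Ioo_and_ne.1 hC₀
  obtain ⟨ht0, ht1⟩ := ht
  obtain ⟨hr0, hr1⟩ := hr
  obtain ⟨hs0, hs1⟩ := hs
  have hdBC : dist B C ≠ 0 := dist_ne_zero.2 hBC
  have hdCA : dist C A ≠ 0 := dist_ne_zero.2 hCA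
  have hdAB : dist A B ≠ 0 := dist_ne_zero.2 hAB
  have ht1' : (1 : ℝ) - t ≠ 0 := by linarith
  have hr1' : (1 : ℝ) - r ≠ 0 := by linarith
  have hs1' : (1 : ℝ) - s ≠ 0 := by linarith
  -- rewrite distances
  have h1 : dist C (lineMap B C t) = (1 - t) * dist B C := by
    rw [dist_comm, dist_lineMap_right]
    rw [Real.norm_eq_abs, abs_of_pos (by linarith)]
  have h2 : dist B (lineMap B C t) = t * dist B C := by
    rw [dist_comm, dist_lineMap_left, Real.norm_eq_abs, abs_of_pos ht0]
  have h3 : dist B (lineMap A B s) = (1 - s) * dist A B := by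
    rw [dist_comm, dist_lineMap_right, Real.norm_eq_abs, abs_of_pos (by linarith)]
  have h4 : dist A (lineMap A B s) = s * dist A B := by
    rw [dist_comm, dist_lineMap_left, Real.norm_eq_abs, abs_of_pos hs0]
  have h5 : dist A (lineMap C A r) = (1 - r) * dist C A := by
    rw [dist_comm, dist_lineMap_right, Real.norm_eq_abs, abs_of_pos (by linarith)]
  have h6 : dist C (lineMap C A r) = r * dist C A := by
    rw [dist_comm, dist_lineMap_left, Real.norm_eq_abs, abs_of_pos hr0]
  rw [h1, h2, h3, h4, h5, h6] at hceva
  have ceva' : (1 - t) * (1 - s) * (1 - r) = t * s * r := by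
    field_simp at hceva
    have hd : dist B C * (dist A B * dist C A) ≠ 0 := by positivity
    have key : ((1 - t) * (1 - s) * (1 - r) - t * s * r)
        * (dist B C * (dist A B * dist C A)) = 0 := by linear_combination (dist B C * (dist A B * dist C A)) * hceva
    rcases mul_eq_zero.1 key with h | h
    · linarith [sub_eq_zero.1 h]
    · exact absurd h hd
  -- weights
  set x : ℝ := (1 - s) * (1 - t) with hx
  set y : ℝ := s * (1 - t) with hy
  set z : ℝ := s * t with hz
  set w : ℝ := x + y + z with hw
  have hwpos : 0 < w := by
    have : w = (1 - t) + s * t := by rw [hw, hx, hy, hz]; ring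
    nlinarith
  have hw0 : w ≠ 0 := ne_of_gt hwpos
  refine ⟨lineMap A (lineMap B C t) ((y + z) / w),
    AffineMap.lineMap_mem_affineSpan_pair _ _ _, ?_, ?_⟩
  · have hEq : lineMap A (lineMap B C t) ((y + z) / w)
        = lineMap B (lineMap C A r) ((x + z) / w) := by
      simp only [lineMap_apply_module]
      match_scalars
      · field_simp
        linear_combination ceva'
      · field_simp
        ring
      · field_simp
        linear_combination -ceva'
    rw [hEq]
    exact AffineMap.lineMap_mem_affineSpan_pair _ _ _
  · have hEq : lineMap A (lineMap B C t) ((y + z) / w)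
        = lineMap C (lineMap A B s) ((x + y) / w) := by
      simp only [lineMap_apply_module]
      match_scalars
      · field_simp
        ring
      · field_simp
        ring
      · field_simp
        ring
    rw [hEq]
    exact AffineMap.lineMap_mem_affineSpan_pair _ _ _
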